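/- arXiv:2106.08360 — 3 statements merged into one kernel-verified Lean document; each statement's English description precedes it below -/
import Mathlib

section
/- Let p ≥ 1 and let W ∈ ℝ^p have all entries positive, with N = ∑_{j=1}^p W_j. Define f(z) = N log(∑_{j=1}^p exp(z_j)) − ∑_{j=1}^p W_j z_j for z ∈ ℝ^p, and let z* = clr(W/N), i.e. z*_j = log(W_j/N) − (1/p) ∑_{k=1}^p log(W_k/N). Then z* is a global minimizer of f: f(z*) ≤ f(z) for all z ∈ ℝ^p, and z* satisfies ∑_{j=1}^p z*_j = 0. -/
noncomputable def clr {p : ℕ} (x : Fin p → ℝ) : Fin p → ℝ :=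
  fun j => Real.log (x j) - (1 / (p : ℝ)) * ∑ k, Real.log (x k)

theorem clr_minimizes_negLoglik (p : ℕ) (hp : 1 ≤ p) (W : Fin p → ℝ)
    (hW : ∀ j, 0 < W j) (N : ℝ) (hN : N = ∑ j, W j)
    (f : (Fin p → ℝ) → ℝ)
    (hf : ∀ z, f z = N * Real.log (∑ j, Real.exp (z j)) - ∑ j, W j * z j)
    (zstar : Fin p → ℝ) (hzstar : zstar = clr (fun j => W j / N)) :
    (∀ z : Fin p → ℝ, f zstar ≤ f z) ∧ ∑ j, zstar j = 0 := by
  have hp0 : (0:ℝ) < p := by exact_mod_cast Nat.lt_of_lt_of_le Nat.zero_lt_one hp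
  have hNpos : 0 < N := by
    rw [hN]
    exact Finset.sum_pos (fun j _ => hW j) (Finset.univ_nonempty_iff.mpr ⟨⟨0, hp⟩⟩)
  set c : ℝ := (1 / (p : ℝ)) * ∑ k, Real.log (W k / N) with hc
  have hz : ∀ j, zstar j = Real.log (W j / N) - c := by
    intro j; rw [hzstar]; rfl
  have hWN : ∀ j, 0 < W j / N := fun j => div_pos (hW j) hNpos
  -- sum of zstar is zero
  have hsum : ∑ j, zstar j = 0 := by
    simp only [hz]
    rw [Finset.sum_sub_distrib, Finset.sum_const, Finset.card_univ, Fintype.card_fin]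
    rw [hc]
    field_simp
    rw [nsmul_eq_mul, mul_div_assoc', mul_div_cancel_left₀ _ hp0.ne', sub_self]
  -- value at zstar
  have hexp : ∀ j, Real.exp (zstar j) = (W j / N) * Real.exp (-c) := by
    intro j
    rw [hz j, sub_eq_add_neg, Real.exp_add, Real.exp_log (hWN j)]
  have hsumexp : ∑ j, Real.exp (zstar j) = Real.exp (-c) := by
    simp only [hexp]
    rw [← Finset.sum_mul]
    have : ∑ j, W j / N = 1 := by
      rw [← Finset.sum_div, ← hN, div_self hNpos.ne']
    rw [this, one_mul]
  have hfstar : f zstar = -∑ j, W j * Real.log (W j / N) := by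
    rw [hf, hsumexp, Real.log_exp]
    simp only [hz]
    have : ∑ j, W j * (Real.log (W j / N) - c)
        = ∑ j, W j * Real.log (W j / N) - (∑ j, W j) * c := by
      simp [mul_sub, Finset.sum_sub_distrib, ← Finset.sum_mul]
    rw [this, ← hN]; ring
  refine ⟨?_, hsum⟩
  intro z
  rw [hfstar, hf]
  set S : ℝ := ∑ j, Real.exp (z j) with hS
  have hSpos : 0 < S :=
    Finset.sum_pos (fun j _ => Real.exp_pos _) (Finset.univ_nonempty_iff.mpr ⟨⟨0, hp⟩⟩)
  -- key: ∑ W j * (z j - log (W j / N) - log S) ≤ 0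
  have key : ∑ j, (W j * z j - W j * Real.log (W j / N) - W j * Real.log S)
      ≤ ∑ j, (N * Real.exp (z j) / S - W j) := by
    apply Finset.sum_le_sum
    intro j _
    have hx : 0 < Real.exp (z j) / ((W j / N) * S) :=
      div_pos (Real.exp_pos _) (mul_pos (hWN j) hSpos)
    have hlog := Real.log_le_sub_one_of_pos hx
    have hlx : Real.log (Real.exp (z j) / ((W j / N) * S))
        = z j - Real.log (W j / N) - Real.log S := by
      rw [Real.log_div (Real.exp_pos _).ne' (mul_pos (hWN j) hSpos).ne',
        Real.log_exp, Real.log_mul (hWN j).ne' hSpos.ne']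
      ring
    rw [hlx] at hlog
    have := mul_le_mul_of_nonneg_left hlog (hW j).le
    calc W j * z j - W j * Real.log (W j / N) - W j * Real.log S
        = W j * (z j - Real.log (W j / N) - Real.log S) := by ring
      _ ≤ W j * (Real.exp (z j) / ((W j / N) * S) - 1) := this
      _ = N * Real.exp (z j) / S - W j := by
          field_simp [(hW j).ne', hSpos.ne', hNpos.ne']
  have hrhs : ∑ j, (N * Real.exp (z j) / S - W j) = 0 := by
    rw [Finset.sum_sub_distrib, ← hN]
    have : ∑ j, N * Real.exp (z j) / S = N * S / S := by
      rw [← Finset.sum_div, ← Finset.mul_sum]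
    rw [this, mul_div_assoc, div_self hSpos.ne', mul_one, sub_self]
  rw [hrhs] at key
  have hlhs : ∑ j, (W j * z j - W j * Real.log (W j / N) - W j * Real.log S)
      = ∑ j, W j * z j - ∑ j, W j * Real.log (W j / N) - N * Real.log S := by
    rw [Finset.sum_sub_distrib, Finset.sum_sub_distrib, ← Finset.sum_mul, ← hN]
  rw [hlhs] at key
  linarith
end

section
/- Let n, p ≥ 1 and let W be an n×p real matrix with nonnegative entries, with row sums N_i = ∑_{j=1}^p W_{ij} and total N = ∑_{i=1}^n N_i, and assume N > 0. Let L ≥ (max_{1≤i≤n} N_i)/N. Then for all Z, Y ∈ ℝ^{n×p}, the second-order approximation error is nonpositive: L_N(Z; W) − L_N(Y; W) − ∑_{i,j} (Z_{ij} − Y_{ij}) G_{ij}(Y) − (L/2) ∑_{i,j} (Z_{ij} − Y_{ij})² ≤ 0, where G_{ij}(Y) = (N_i/N) softmax(Y_i)_j − W_{ij}/N is the gradient of L_N(·; W) at Y. -/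
noncomputable def softmax {p : ℕ} (z : Fin p → ℝ) : Fin p → ℝ :=
  fun j => Real.exp (z j) / ∑ k, Real.exp (z k)

noncomputable def negLoglik {n p : ℕ} (N : ℝ) (W Z : Fin n → Fin p → ℝ) : ℝ :=
  (1 / N) * ∑ i, ((∑ j, W i j) * Real.log (∑ j, Real.exp (Z i j))
    - ∑ j, W i j * Z i j)

open Finset

lemma lse_key {p : ℕ} (hp : 0 < p) (y z : Fin p → ℝ) :
    Real.log (∑ j, Real.exp (z j)) - Real.log (∑ j, Real.exp (y j))
      - ∑ j, (z j - y j) * softmax y j ≤ (1/2) * ∑ j, (z j - y j) ^ 2 := by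
  haveI : Nonempty (Fin p) := Fin.pos_iff_nonempty.mp hp
  set d : Fin p → ℝ := fun j => z j - y j with hd
  set C : ℝ := (1/2) * ∑ j, d j ^ 2 with hC
  have hC0 : 0 ≤ C := by
    have : 0 ≤ ∑ j, d j ^ 2 := Finset.sum_nonneg fun j _ => sq_nonneg _
    positivity
  set S : ℝ → ℝ := fun t => ∑ j, Real.exp (y j + t * d j) with hS
  set S1 : ℝ → ℝ := fun t => ∑ j, d j * Real.exp (y j + t * d j) with hS1
  set S2 : ℝ → ℝ := fun t => ∑ j, d j ^ 2 * Real.exp (y j + t * d j) with hS2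
  clear_value d C S S1 S2
  have hSpos : ∀ t, 0 < S t := by
    intro t
    rw [hS]
    exact Finset.sum_pos (fun j _ => Real.exp_pos _) Finset.univ_nonempty
  have hlin : ∀ (j : Fin p) (t : ℝ), HasDerivAt (fun t => y j + t * d j) (d j) t := by
    intro j t
    simpa using ((hasDerivAt_id t).mul_const (d j)).const_add (y j)
  have hdS : ∀ t, HasDerivAt S (S1 t) t := by
    intro t
    simp only [hS, hS1]
    apply HasDerivAt.fun_sum
    intro j _
    simpa [mul_comm] using (hlin j t).exp
  have hdS1 : ∀ t, HasDerivAt S1 (S2 t) t := by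
    intro t
    simp only [hS1, hS2]
    apply HasDerivAt.fun_sum
    intro j _
    have := ((hlin j t).exp).const_mul (d j)
    convert this using 1
    case e'_4 => rfl
    case e'_9 => ring
  have hg : ∀ t, HasDerivAt (fun t => Real.log (S t)) (S1 t / S t) t := fun t =>
    (hdS t).log (ne_of_gt (hSpos t))
  have hg' : ∀ t, HasDerivAt (fun t => S1 t / S t)
      ((S2 t * S t - S1 t * S1 t) / S t ^ 2) t := fun t =>
    (hdS1 t).div (hdS t) (ne_of_gt (hSpos t))
  -- Hessian bound
  have hhess : ∀ t : ℝ, (S2 t * S t - S1 t * S1 t) / S t ^ 2 ≤ C := by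
    intro t
    rw [div_le_iff₀ (pow_pos (hSpos t) 2)]
    obtain ⟨jM, -, hjM⟩ := Finset.exists_mem_eq_sup' Finset.univ_nonempty d
    obtain ⟨jm, -, hjm⟩ := Finset.exists_mem_eq_inf' Finset.univ_nonempty d
    have hbound : ∀ j : Fin p,
        (d j - (d jM + d jm) / 2) ^ 2 ≤ ((d jM - d jm) / 2) ^ 2 := by
      intro j
      have h1 : d j ≤ d jM := hjM ▸ Finset.le_sup' d (Finset.mem_univ j)
      have h2 : d jm ≤ d j := hjm ▸ Finset.inf'_le d (Finset.mem_univ j)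
      nlinarith [mul_nonneg (sub_nonneg.mpr h1) (sub_nonneg.mpr h2)]
    have hRC : ((d jM - d jm) / 2) ^ 2 ≤ C := by
      by_cases hij : jM = jm
      · simpa [hij] using hC0
      · have hsub : d jM ^ 2 + d jm ^ 2 ≤ ∑ j, d j ^ 2 := by
          have := Finset.sum_le_sum_of_subset_of_nonneg
            (Finset.subset_univ ({jM, jm} : Finset (Fin p)))
            (fun j _ _ => sq_nonneg (d j))
          rwa [Finset.sum_pair hij] at this
        rw [hC]
        nlinarith [sq_nonneg (d jM + d jm)]
    have hexp : ∑ j, (d j - (d jM + d jm) / 2) ^ 2 * Real.exp (y j + t * d j)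
        = S2 t - 2 * ((d jM + d jm) / 2) * S1 t + ((d jM + d jm) / 2) ^ 2 * S t := by
      simp only [hS, hS1, hS2, Finset.mul_sum, ← Finset.sum_add_distrib,
        ← Finset.sum_sub_distrib]
      exact Finset.sum_congr rfl fun j _ => by ring
    have h1 : ∑ j, (d j - (d jM + d jm) / 2) ^ 2 * Real.exp (y j + t * d j) ≤ C * S t := by
      calc ∑ j, (d j - (d jM + d jm) / 2) ^ 2 * Real.exp (y j + t * d j)
          ≤ ∑ j, C * Real.exp (y j + t * d j) :=
            Finset.sum_le_sum fun j _ =>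
              mul_le_mul_of_nonneg_right ((hbound j).trans hRC) (Real.exp_pos _).le
        _ = C * S t := by rw [hS, Finset.mul_sum]
    rw [hexp] at h1
    nlinarith [sq_nonneg (S1 t - (d jM + d jm) / 2 * S t), hSpos t]
  -- two mean value theorems
  obtain ⟨c₁, hc₁, heq₁⟩ := exists_hasDerivAt_eq_slope (fun t => Real.log (S t))
    (fun t => S1 t / S t) zero_lt_one
    (fun x _ => (hg x).continuousAt.continuousWithinAt) (fun x _ => hg x)
  obtain ⟨c₂, hc₂, heq₂⟩ := exists_hasDerivAt_eq_slope (fun t => S1 t / S t)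
    (fun t => (S2 t * S t - S1 t * S1 t) / S t ^ 2) hc₁.1
    (fun x _ => (hg' x).continuousAt.continuousWithinAt) (fun x _ => hg' x)
  have hstep : Real.log (S 1) - Real.log (S 0) - S1 0 / S 0 ≤ C := by
    have h2 : S1 c₁ / S c₁ - S1 0 / S 0
        = c₁ * ((S2 c₂ * S c₂ - S1 c₂ * S1 c₂) / S c₂ ^ 2) := by
      rw [heq₂, sub_zero, mul_div_cancel₀ _ (ne_of_gt hc₁.1)]
    have h3 : Real.log (S 1) - Real.log (S 0) = S1 c₁ / S c₁ := by
      rw [heq₁]; norm_num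
    have hcc := hhess c₂
    have h4 : c₁ * ((S2 c₂ * S c₂ - S1 c₂ * S1 c₂) / S c₂ ^ 2) ≤ C := by
      nlinarith [mul_nonneg hc₁.1.le (sub_nonneg.mpr hcc),
        mul_nonneg (sub_nonneg.mpr hc₁.2.le) hC0]
    linarith
  have e1 : S 1 = ∑ j, Real.exp (z j) := by
    rw [hS]; exact Finset.sum_congr rfl fun j _ => by rw [hd]; ring_nf
  have e0 : S 0 = ∑ j, Real.exp (y j) := by
    rw [hS]; exact Finset.sum_congr rfl fun j _ => by norm_num
  have e2 : ∑ j, (z j - y j) * softmax y j = S1 0 / S 0 := by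
    simp only [hS1, hS, hd, softmax, zero_mul, add_zero, Finset.sum_div, mul_div_assoc]
  rw [← e1, ← e0, e2]
  exact hstep

theorem descent_lemma (n p : ℕ) (hn : 1 ≤ n) (hp : 1 ≤ p)
    (W : Fin n → Fin p → ℝ) (hW : ∀ i j, 0 ≤ W i j)
    (N : ℝ) (hN : N = ∑ i, ∑ j, W i j) (hNpos : 0 < N)
    (L : ℝ)
    (hL : (Finset.univ.sup' (Finset.univ_nonempty_iff.mpr ⟨⟨0, hn⟩⟩)
      fun i : Fin n => ∑ j, W i j) / N ≤ L)
    (Z Y : Fin n → Fin p → ℝ) :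
    negLoglik N W Z - negLoglik N W Y
      - (∑ i, ∑ j, (Z i j - Y i j) *
          (((∑ j', W i j') / N) * softmax (Y i) j - W i j / N))
      - (L / 2) * ∑ i, ∑ j, (Z i j - Y i j) ^ 2 ≤ 0 := by
  set D : Fin n → ℝ := fun i => Real.log (∑ j, Real.exp (Z i j))
    - Real.log (∑ j, Real.exp (Y i j)) - ∑ j, (Z i j - Y i j) * softmax (Y i) j with hD
  set Q : Fin n → ℝ := fun i => ∑ j, (Z i j - Y i j) ^ 2 with hQ
  have hinner : ∀ i, ∑ j, (Z i j - Y i j) *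
      (((∑ j', W i j') / N) * softmax (Y i) j - W i j / N)
      = ((∑ j', W i j') / N) * (∑ j, (Z i j - Y i j) * softmax (Y i) j)
        - (1/N) * ((∑ j, W i j * Z i j) - ∑ j, W i j * Y i j) := by
    intro i
    simp only [← Finset.sum_sub_distrib, Finset.mul_sum]
    exact Finset.sum_congr rfl fun j _ => by ring
  have hid : negLoglik N W Z - negLoglik N W Y
      - (∑ i, ∑ j, (Z i j - Y i j) *
          (((∑ j', W i j') / N) * softmax (Y i) j - W i j / N))
      = ∑ i, ((∑ j', W i j') / N) * D i := by
    unfold negLoglik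
    rw [Finset.mul_sum, Finset.mul_sum]
    simp only [hinner, hD]
    rw [← Finset.sum_sub_distrib, ← Finset.sum_sub_distrib]
    exact Finset.sum_congr rfl fun i _ => by ring
  have main : ∑ i, ((∑ j', W i j') / N) * D i - (L / 2) * ∑ i, Q i ≤ 0 := by
    rw [Finset.mul_sum, ← Finset.sum_sub_distrib]
    apply Finset.sum_nonpos
    intro i _
    have hQ0 : 0 ≤ Q i := Finset.sum_nonneg fun j _ => sq_nonneg _
    have hkey : D i ≤ (1/2) * Q i := lse_key hp (Y i) (Z i)
    have ha : 0 ≤ (∑ j', W i j') / N :=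
      div_nonneg (Finset.sum_nonneg fun j _ => hW i j) hNpos.le
    have haL : (∑ j', W i j') / N ≤ L := by
      refine le_trans ?_ hL
      gcongr
      exact Finset.le_sup' (fun i : Fin n => ∑ j, W i j) (Finset.mem_univ i)
    have hL0 : 0 ≤ L := ha.trans haL
    rcases le_total (D i) 0 with h | h
    · have h1 : (∑ j', W i j') / N * D i ≤ 0 := mul_nonpos_of_nonneg_of_nonpos ha h
      nlinarith [mul_nonneg hL0 hQ0]
    · have h1 : (∑ j', W i j') / N * D i ≤ L * D i := mul_le_mul_of_nonneg_right haL h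
      have h2 : L * D i ≤ L * ((1/2) * Q i) := mul_le_mul_of_nonneg_left hkey hL0
      linarith
  have hQsum : (∑ i, ∑ j, (Z i j - Y i j) ^ 2) = ∑ i, Q i := rfl
  linarith [hid, main, hQsum.le, hQsum.ge]
end

section
/- For any integer p ≥ 1, the softmax map is 1-Lipschitz with respect to the Euclidean norm: for all z, w ∈ ℝ^p, (∑_{j=1}^p (softmax(z)_j − softmax(w)_j)²)^{1/2} ≤ (∑_{j=1}^p (z_j − w_j)²)^{1/2}. -/
theorem softmax_lipschitz (p : ℕ) (hp : 1 ≤ p) (z w : Fin p → ℝ) :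
    Real.sqrt (∑ j, (softmax z j - softmax w j) ^ 2) ≤
      Real.sqrt (∑ j, (z j - w j) ^ 2) := by
  haveI : Nonempty (Fin p) := Fin.pos_iff_nonempty.mp hp
  set b : Fin p → ℝ := fun j => z j - w j with hb
  set u : Fin p → ℝ := fun j => softmax z j - softmax w j with hu
  set N : Fin p → ℝ → ℝ := fun j t => Real.exp (w j + t * b j) with hN
  set S : ℝ → ℝ := fun t => ∑ k, N k t with hS
  have hSpos : ∀ t, 0 < S t := fun t =>
    Finset.sum_pos (fun k _ => Real.exp_pos _) Finset.univ_nonempty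
  set m : ℝ → ℝ := fun t => (∑ k, b k * N k t) / S t with hm
  set g : ℝ → ℝ := fun t => ∑ j, u j * (N j t / S t) with hg
  -- derivatives
  have hNd : ∀ j t, HasDerivAt (fun t => N j t) (b j * N j t) t := by
    intro j t
    have h1 : HasDerivAt (fun t : ℝ => w j + t * b j) (b j) t := by
      simpa using ((hasDerivAt_id t).mul_const (b j)).const_add (w j)
    simpa [hN, mul_comm] using h1.exp
  have hSd : ∀ t, HasDerivAt S (∑ k, b k * N k t) t := by
    intro t
    exact HasDerivAt.fun_sum (fun k _ => hNd k t)
  have hgd : ∀ t, HasDerivAt g (∑ j, u j * ((N j t / S t) * (b j - m t))) t := by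
    intro t
    apply HasDerivAt.fun_sum
    intro j _
    have hd := ((hNd j t).div (hSd t) (hSpos t).ne')
    have heq : (b j * N j t * S t - N j t * ∑ k, b k * N k t) / (S t) ^ 2
        = (N j t / S t) * (b j - m t) := by
      rw [hm]
      field_simp [(hSpos t).ne']
    rw [← heq]
    exact hd.const_mul (u j)
  -- bound on the derivative
  have hbound : ∀ t, |∑ j, u j * ((N j t / S t) * (b j - m t))|
      ≤ Real.sqrt (∑ j, u j ^ 2) * Real.sqrt (∑ j, b j ^ 2) := by
    intro t
    set s : Fin p → ℝ := fun j => N j t / S t with hsdef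
    have hs0 : ∀ j, 0 ≤ s j := fun j => div_nonneg (Real.exp_pos _).le (hSpos t).le
    have hs1 : ∀ j, s j ≤ 1 := by
      intro j
      rw [hsdef, div_le_one (hSpos t)]
      exact Finset.single_le_sum (f := fun k => N k t)
        (fun k _ => (Real.exp_pos _).le) (Finset.mem_univ j)
    have hssum : (∑ j, s j) = 1 := by
      have h1 : (∑ j, s j) = (∑ j, N j t) / S t := by
        rw [Finset.sum_div]
      rw [h1]
      exact div_self (hSpos t).ne'
    have hsb : (∑ j, s j * b j) = m t := by
      have h1 : (∑ j, s j * b j) = (∑ j, b j * N j t) / S t := by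
        rw [Finset.sum_div]
        exact Finset.sum_congr rfl fun j _ => by rw [hsdef]; ring
      rw [h1]
    have key : (∑ j, (s j * (b j - m t)) ^ 2) ≤ ∑ j, b j ^ 2 := by
      have step1 : (∑ j, (s j * (b j - m t)) ^ 2) ≤ ∑ j, s j * (b j - m t) ^ 2 := by
        apply Finset.sum_le_sum
        intro j _
        have : (s j * (b j - m t)) ^ 2 = s j ^ 2 * (b j - m t) ^ 2 := by ring
        rw [this]
        apply mul_le_mul_of_nonneg_right _ (sq_nonneg _)
        nlinarith [hs0 j, hs1 j]
      have step2 : (∑ j, s j * (b j - m t) ^ 2) = (∑ j, s j * b j ^ 2) - m t ^ 2 := by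
        have expand : ∀ j, s j * (b j - m t) ^ 2
            = s j * b j ^ 2 - 2 * m t * (s j * b j) + m t ^ 2 * s j := by
          intro j; ring
        rw [Finset.sum_congr rfl fun j _ => expand j]
        simp only [Finset.sum_add_distrib, Finset.sum_sub_distrib, ← Finset.mul_sum,
          hsb, hssum]
        ring
      have step3 : (∑ j, s j * b j ^ 2) ≤ ∑ j, b j ^ 2 := by
        apply Finset.sum_le_sum
        intro j _
        nlinarith [hs1 j, sq_nonneg (b j), hs0 j]
      nlinarith [sq_nonneg (m t)]
    calc |∑ j, u j * ((N j t / S t) * (b j - m t))|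
        = |∑ j, u j * (s j * (b j - m t))| := by rw [hsdef]
      _ ≤ Real.sqrt (∑ j, u j ^ 2) * Real.sqrt (∑ j, (s j * (b j - m t)) ^ 2) := by
          have cs := Finset.sum_mul_sq_le_sq_mul_sq Finset.univ
            (fun j => u j) (fun j => s j * (b j - m t))
          calc |∑ j, u j * (s j * (b j - m t))|
              = Real.sqrt ((∑ j, u j * (s j * (b j - m t))) ^ 2) :=
                (Real.sqrt_sq_eq_abs _).symm
            _ ≤ Real.sqrt ((∑ j, u j ^ 2) * ∑ j, (s j * (b j - m t)) ^ 2) :=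
                Real.sqrt_le_sqrt cs
            _ = _ := Real.sqrt_mul (Finset.sum_nonneg fun j _ => sq_nonneg _) _
      _ ≤ Real.sqrt (∑ j, u j ^ 2) * Real.sqrt (∑ j, b j ^ 2) := by
          exact mul_le_mul_of_nonneg_left (Real.sqrt_le_sqrt key) (Real.sqrt_nonneg _)
  -- MVT
  have hcont : ContinuousOn g (Set.Icc 0 1) :=
    fun x _ => ((hgd x).differentiableAt.continuousAt).continuousWithinAt
  obtain ⟨c, hc, hceq⟩ := exists_hasDerivAt_eq_slope g
    (fun t => ∑ j, u j * ((N j t / S t) * (b j - m t)))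
    (by norm_num : (0:ℝ) < 1) hcont (fun x _ => hgd x)
  have hg1 : g 1 = ∑ j, u j * softmax z j := by
    rw [hg]
    apply Finset.sum_congr rfl
    intro j _
    have : ∀ k, N k 1 = Real.exp (z k) := by
      intro k; rw [hN]; simp [hb]
    rw [hS]
    simp only [this]
    rfl
  have hg0 : g 0 = ∑ j, u j * softmax w j := by
    rw [hg]
    apply Finset.sum_congr rfl
    intro j _
    have : ∀ k, N k 0 = Real.exp (w k) := by
      intro k; rw [hN]; simp
    rw [hS]
    simp only [this]
    rfl
  have hdiff : g 1 - g 0 = ∑ j, u j ^ 2 := by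
    rw [hg1, hg0, ← Finset.sum_sub_distrib]
    apply Finset.sum_congr rfl
    intro j _
    rw [hu]; ring
  have hmain : (∑ j, u j ^ 2) ≤ Real.sqrt (∑ j, u j ^ 2) * Real.sqrt (∑ j, b j ^ 2) :=
    calc (∑ j, u j ^ 2) = g 1 - g 0 := hdiff.symm
      _ = ∑ j, u j * ((N j c / S c) * (b j - m c)) := by rw [hceq]; ring
      _ ≤ |∑ j, u j * ((N j c / S c) * (b j - m c))| := le_abs_self _
      _ ≤ _ := hbound c
  -- conclude
  have hA2 : Real.sqrt (∑ j, u j ^ 2) ^ 2 = ∑ j, u j ^ 2 :=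
    Real.sq_sqrt (Finset.sum_nonneg fun j _ => sq_nonneg _)
  show Real.sqrt (∑ j, u j ^ 2) ≤ Real.sqrt (∑ j, b j ^ 2)
  rcases (Real.sqrt_nonneg (∑ j, u j ^ 2)).eq_or_lt with h0 | h0
  · rw [← h0]; exact Real.sqrt_nonneg _
  · nlinarith [hmain, hA2, Real.sqrt_nonneg (∑ j, b j ^ 2)]
end
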